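/- Let (Z,d) be a uniformly locally finite metric space. Assume there exists a constant C > 0 such that for every R > 0 and every ε > 0 there exist S > 0 and a Schur multiplier k : Z × Z → ℂ with ‖k‖_S ≤ C such that k(x,y) = 0 whenever d(x,y) > S, and |k(x,y) − 1| < ε whenever d(x,y) ≤ R. Then every ghost operator in the uniform Roe algebra C*_u(Z) is a compact operator on ℓ²(Z). -/

import Mathlib

open MeasureTheory Metric Bornology Filter Topology
open scoped ENNReal BoundedContinuousFunction

noncomputable section

/-- `ℓ²(X)` over `ℂ`. -/
abbrev l2 (X : Type*) : Type _ := lp (fun _ : X => ℂ) 2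

/-- The standard basis vector `δ_x` of `ℓ²(X)`. -/
def delta {X : Type*} (x : X) : l2 X := by classical exact lp.single 2 x 1

/-- The matrix entry `a_{x,y} = ⟨a δ_y, δ_x⟩` of a bounded operator on `ℓ²(X)`. -/
def entry {X : Type*} (a : l2 X →L[ℂ] l2 X) (x y : X) : ℂ := inner ℂ (delta x) (a (delta y))

/-- `k` is a Schur multiplier with Schur norm `‖k‖_S ≤ C`: there is a bounded linear map
`M = m_k` on `B(ℓ²(X))` of norm at most `C` satisfying the matrix-entry identity
`(m_k(a))_{x,y} = k(x,y)·a_{x,y}`. (The map `m_k` is uniquely determined by this identity,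
so `‖k‖_S ≤ C` iff such an `M` exists.) -/
def IsSchurMultiplierWithBound {X : Type*} (k : X → X → ℂ) (C : ℝ) : Prop :=
  ∃ M : (l2 X →L[ℂ] l2 X) →L[ℂ] l2 X →L[ℂ] l2 X,
    ‖M‖ ≤ C ∧ ∀ (a : l2 X →L[ℂ] l2 X) (x y : X), entry (M a) x y = k x y * entry a x y

/-- A metric space is uniformly locally finite if there is a uniform bound on the
cardinality of all closed balls of each fixed radius. -/
def UniformlyLocallyFinite (Z : Type*) [MetricSpace Z] : Prop :=
  ∀ S > (0 : ℝ), ∃ N : ℕ, ∀ z : Z,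
    (Metric.closedBall z S).Finite ∧ (Metric.closedBall z S).ncard ≤ N

/-- A bounded operator on `ℓ²(Z)` has propagation at most `R`. -/
def HasPropagationLE {Z : Type*} [MetricSpace Z] (a : l2 Z →L[ℂ] l2 Z) (R : ℝ) : Prop :=
  ∀ x y : Z, R < dist x y → entry a x y = 0

/-- The uniform Roe algebra of `Z`: the operator-norm closure of the set of bounded
operators of finite propagation. -/
def uniformRoeAlgebra (Z : Type*) [MetricSpace Z] : Set (l2 Z →L[ℂ] l2 Z) :=
  closure {a | ∃ R : ℝ, HasPropagationLE a R}

/-- A ghost operator: the matrix entries vanish at infinity. -/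
def IsGhost {Z : Type*} [MetricSpace Z] (a : l2 Z →L[ℂ] l2 Z) : Prop :=
  ∀ ε > (0 : ℝ), ∃ F : Set Z, Bornology.IsBounded F ∧
    ∀ x y : Z, (x, y) ∉ F ×ˢ F → ‖entry a x y‖ < ε


open scoped Classical ComplexConjugate
set_option maxHeartbeats 1000000

section Aux

variable {X : Type*}

lemma norm_delta (x : X) : ‖delta x‖ = 1 := by
  have := lp.norm_single (p := 2) (E := fun _ : X => ℂ) (by norm_num) x (1:ℂ)
  simpa [delta] using this

lemma inner_delta_left (x : X) (f : l2 X) : (inner ℂ (delta x) f : ℂ) = f x := by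
  classical
  simp only [delta]
  rw [lp.inner_single_left]
  simp [RCLike.inner_apply]

lemma entry_eq (a : l2 X →L[ℂ] l2 X) (x y : X) : entry a x y = a (delta y) x :=
  inner_delta_left _ _

lemma norm_entry_le (a : l2 X →L[ℂ] l2 X) (x y : X) : ‖entry a x y‖ ≤ ‖a‖ := by
  have h := norm_inner_le_norm (𝕜 := ℂ) (delta x) (a (delta y))
  have h2 : ‖a (delta y)‖ ≤ ‖a‖ * ‖delta y‖ := a.le_opNorm _
  rw [norm_delta] at h h2
  calc ‖entry a x y‖ ≤ 1 * ‖a (delta y)‖ := h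
    _ = ‖a (delta y)‖ := one_mul _
    _ ≤ ‖a‖ * 1 := h2
    _ = ‖a‖ := mul_one _

lemma inner_delta_delta (x y : X) :
    (inner ℂ (delta x) (delta y) : ℂ) = if x = y then 1 else 0 := by
  rw [inner_delta_left]
  simp only [delta]
  rw [lp.single_apply]
  simp [eq_comm, Pi.single_apply]

lemma entry_sub (a b : l2 X →L[ℂ] l2 X) (x y : X) :
    entry (a - b) x y = entry a x y - entry b x y := by
  simp only [entry, ContinuousLinearMap.sub_apply, inner_sub_right]

lemma smul_delta (x : X) (c : ℂ) : c • delta x = lp.single 2 x c := by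
  classical
  simp only [delta]
  rw [← lp.single_smul]
  norm_num

lemma isCompactOperator_smulRight {E F : Type*} [NormedAddCommGroup E] [NormedSpace ℂ E]
    [NormedAddCommGroup F] [NormedSpace ℂ F] (g : E →L[ℂ] ℂ) (w : F) :
    IsCompactOperator ⇑(g.smulRight w) := by
  refine ⟨(fun c : ℂ => c • w) '' Metric.closedBall 0 1,
    ((isCompact_closedBall 0 1).image (by continuity)), ?_⟩
  have h1 : {v : E | ‖g v‖ ≤ 1} ∈ (nhds (0 : E)) := by
    have hc : Continuous fun v : E => ‖g v‖ := g.continuous.norm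
    have h2 : {v : E | ‖g v‖ < 1} ∈ nhds (0 : E) := by
      have h3 : ContinuousAt (fun v : E => ‖g v‖) 0 := hc.continuousAt
      have h4 := h3.preimage_mem_nhds (t := Set.Iio (1:ℝ)) (by simp [Iio_mem_nhds one_pos])
      simpa [Set.preimage] using h4
    exact Filter.mem_of_superset h2 (fun v hv => by
      simp only [Set.mem_setOf_eq] at hv ⊢; exact le_of_lt hv)
  refine Filter.mem_of_superset h1 (fun v hv => ?_)
  exact ⟨g v, by simpa using hv, rfl⟩

/-- rank one operator `v ↦ ⟪δ_y, v⟫ δ_x`. -/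
def rankOne (x y : X) : l2 X →L[ℂ] l2 X := (innerSL ℂ (delta y)).smulRight (delta x)

lemma rankOne_apply (x y : X) (v : l2 X) :
    rankOne x y v = (inner ℂ (delta y) v : ℂ) • delta x := rfl

lemma isCompactOperator_rankOne (x y : X) : IsCompactOperator ⇑(rankOne x y) :=
  isCompactOperator_smulRight _ _

lemma norm_rankOne_le (x y : X) : ‖rankOne x y‖ ≤ 1 := by
  rw [rankOne, ContinuousLinearMap.norm_smulRight_apply, innerSL_apply_norm, norm_delta,
    norm_delta, one_mul]

lemma entry_rankOne_self (x y : X) : entry (rankOne x y) x y = 1 := by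
  rw [entry_eq, rankOne_apply, inner_delta_delta, if_pos rfl, one_smul]
  have := inner_delta_delta x x
  rw [inner_delta_left, if_pos rfl] at this
  exact this

/-- the orthogonal projection onto coordinates in `s`. -/
def proj (s : Finset X) : l2 X →L[ℂ] l2 X := ∑ x ∈ s, rankOne x x

lemma isCompactOperator_proj (s : Finset X) : IsCompactOperator ⇑(proj s) := by
  classical
  rw [proj]
  induction s using Finset.induction with
  | empty => simpa using (isCompactOperator_zero (M₁ := l2 X) (M₂ := l2 X))
  | @insert z t hz ih =>
      rw [Finset.sum_insert hz]
      have h := (isCompactOperator_rankOne z z).add ih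
      rwa [show (⇑(rankOne z z) + ⇑(∑ x ∈ t, rankOne x x)) =
        ⇑(rankOne z z + ∑ x ∈ t, rankOne x x) from rfl] at h

lemma proj_delta (s : Finset X) (y : X) :
    proj s (delta y) = if y ∈ s then delta y else 0 := by
  classical
  simp only [proj, ContinuousLinearMap.sum_apply, rankOne_apply, inner_delta_delta]
  rw [Finset.sum_congr rfl (fun z (_ : z ∈ s) =>
    show (if z = y then (1:ℂ) else 0) • delta z
      = if z = y then delta y else 0 by
    split_ifs with hzy
    · rw [hzy, one_smul]
    · rw [zero_smul])]
  rw [Finset.sum_ite_eq' s y (fun _ => delta y)]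

lemma inner_delta_proj (s : Finset X) (x : X) (v : l2 X) :
    (inner ℂ (delta x) (proj s v) : ℂ) = if x ∈ s then (inner ℂ (delta x) v : ℂ) else 0 := by
  classical
  simp only [proj, ContinuousLinearMap.sum_apply, rankOne_apply, inner_sum, inner_smul_right,
    inner_delta_delta]
  rw [Finset.sum_congr rfl (fun z (_ : z ∈ s) =>
    show (inner ℂ (delta z) v : ℂ) * (if x = z then 1 else 0)
      = if z = x then (inner ℂ (delta x) v : ℂ) else 0 by
    by_cases hzx : z = x
    · rw [if_pos hzx, if_pos hzx.symm, hzx, mul_one]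
    · rw [if_neg hzx, if_neg (fun hc => hzx hc.symm), mul_zero])]
  rw [Finset.sum_ite_eq' s x (fun _ => (inner ℂ (delta x) v : ℂ))]

lemma entry_trunc (a : l2 X →L[ℂ] l2 X) (s : Finset X) (x y : X) :
    entry ((proj s).comp (a.comp (proj s))) x y
      = if x ∈ s ∧ y ∈ s then entry a x y else 0 := by
  classical
  simp only [entry, ContinuousLinearMap.comp_apply]
  rw [inner_delta_proj, proj_delta]
  by_cases hx : x ∈ s <;> by_cases hy : y ∈ s <;>
    simp [hx, hy, inner_zero_right]

end Aux

section SchurTest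

lemma swapE {Z : Type*} [MetricSpace Z] {S : ℝ} {N : ℕ}
    (T : Z → Finset Z) (hT : ∀ y x, x ∈ T y ↔ dist x y ≤ S)
    (hcard : ∀ y, (T y).card ≤ N) (V : Z → ℝ≥0∞) :
    ∑' y, ∑ x ∈ T y, V x ≤ N * ∑' x, V x := by
  classical
  have key : ∀ y, (∑ x ∈ T y, V x) = ∑' x, (if dist x y ≤ S then V x else 0) := by
    intro y
    rw [tsum_eq_sum (s := T y) (fun x hx => by
      rw [if_neg (fun hc => hx ((hT y x).2 hc))])]
    exact Finset.sum_congr rfl fun x hx => (if_pos ((hT y x).1 hx)).symm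
  calc ∑' y, ∑ x ∈ T y, V x = ∑' y, ∑' x, (if dist x y ≤ S then V x else 0) := by
        simp_rw [key]
    _ = ∑' x, ∑' y, (if dist x y ≤ S then V x else 0) := ENNReal.tsum_comm
    _ ≤ ∑' x, (N : ℝ≥0∞) * V x := by
        refine ENNReal.tsum_le_tsum fun x => ?_
        have h1 : (∑' y, if dist x y ≤ S then V x else 0) = ∑ y ∈ T x, V x := by
          rw [tsum_eq_sum (s := T x) (fun y hy => if_neg (fun hc =>
            hy ((hT x y).2 (by rwa [dist_comm]))))]
          exact Finset.sum_congr rfl fun y hy =>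
            if_pos (by rw [dist_comm]; exact (hT x y).1 hy)
        rw [h1, Finset.sum_const, nsmul_eq_mul]
        exact mul_le_mul_left (by exact_mod_cast hcard x) _
    _ = N * ∑' x, V x := ENNReal.tsum_mul_left

lemma opNorm_le_of_prop {Z : Type*} [MetricSpace Z] (a : l2 Z →L[ℂ] l2 Z)
    {S δ : ℝ} (N : ℕ) (hδ0 : 0 ≤ δ)
    (hfin : ∀ z : Z, (Metric.closedBall z S).Finite ∧ (Metric.closedBall z S).ncard ≤ N)
    (hprop : ∀ x y : Z, S < dist x y → entry a x y = 0)
    (hent : ∀ x y : Z, ‖entry a x y‖ ≤ δ) :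
    ‖a‖ ≤ N * δ := by
  classical
  set T : Z → Finset Z := fun y => (hfin y).1.toFinset with hTdef
  have hT : ∀ y x, x ∈ T y ↔ dist x y ≤ S := by
    intro y x
    simp [hTdef, Set.Finite.mem_toFinset, Metric.mem_closedBall]
  have hcard : ∀ y, (T y).card ≤ N := by
    intro y
    have h2 := (hfin y).2
    rwa [Set.ncard_eq_toFinset_card _ (hfin y).1] at h2
  have master : ∀ c : ℝ, 0 < c → ∀ ξ η : l2 Z,
      ‖(inner ℂ η (a ξ) : ℂ)‖ ≤ N * δ * (c * ‖ξ‖^2 + ‖η‖^2 / c) / 2 := by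
    intro c hc ξ η
    have hA : HasSum (fun y => ξ y • a (delta y)) (a ξ) := by
      have h1 : HasSum (fun y => lp.single 2 y (ξ y)) ξ :=
        lp.hasSum_single ENNReal.ofNat_ne_top ξ
      have h2 := h1.mapL a
      simp only [← smul_delta, _root_.map_smul] at h2
      exact h2
    have hB : HasSum (fun y => ξ y * (inner ℂ η (a (delta y)) : ℂ)) (inner ℂ η (a ξ)) := by
      have h2 := hA.mapL (innerSL ℂ η)
      simpa [inner_smul_right] using h2
    have hrow : ∀ y, (inner ℂ η (a (delta y)) : ℂ) = ∑ x ∈ T y, conj (η x) * entry a x y := by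
      intro y
      have h1 : HasSum (fun x => conj (η x) * entry a x y) (inner ℂ η (a (delta y))) := by
        have h0 := lp.hasSum_inner (𝕜 := ℂ) η (a (delta y))
        have he : ∀ x, (inner ℂ (η x) ((a (delta y)) x) : ℂ) = conj (η x) * entry a x y := by
          intro x
          rw [RCLike.inner_apply, entry_eq, mul_comm]
        simpa only [he] using h0
      refine h1.unique (hasSum_sum_of_ne_finset_zero fun x hx => ?_)
      have hd : S < dist x y := lt_of_not_ge (fun hc' => hx ((hT y x).2 hc'))
      rw [hprop x y hd, mul_zero]
    have bnd : ∀ y, ‖ξ y * (inner ℂ η (a (delta y)) : ℂ)‖ ≤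
        ∑ x ∈ T y, (δ * c / 2 * ‖ξ y‖^2 + δ / (2*c) * ‖η x‖^2) := by
      intro y
      rw [norm_mul, hrow y]
      calc ‖ξ y‖ * ‖∑ x ∈ T y, conj (η x) * entry a x y‖
          ≤ ‖ξ y‖ * ∑ x ∈ T y, ‖conj (η x) * entry a x y‖ :=
            mul_le_mul_of_nonneg_left (norm_sum_le _ _) (norm_nonneg _)
        _ = ∑ x ∈ T y, ‖ξ y‖ * (‖η x‖ * ‖entry a x y‖) := by
            rw [Finset.mul_sum]
            exact Finset.sum_congr rfl fun x _ => by
              rw [norm_mul, RCLike.norm_conj]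
        _ ≤ ∑ x ∈ T y, (δ * c / 2 * ‖ξ y‖^2 + δ / (2*c) * ‖η x‖^2) := by
            refine Finset.sum_le_sum fun x _ => ?_
            set t := ‖ξ y‖
            set s := ‖η x‖
            have ht : 0 ≤ t := norm_nonneg _
            have hs : 0 ≤ s := norm_nonneg _
            have h3 : t*s ≤ c*t^2/2 + s^2/(2*c) := by
              rw [show c*t^2/2 + s^2/(2*c) = (c^2*t^2 + s^2)/(2*c) by field_simp,
                le_div_iff₀ (by positivity)]
              nlinarith [sq_nonneg (c*t - s)]
            calc t * (s * ‖entry a x y‖) = (t*s) * ‖entry a x y‖ := by ring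
              _ ≤ (t*s) * δ := mul_le_mul_of_nonneg_left (hent x y) (by positivity)
              _ ≤ (c*t^2/2 + s^2/(2*c)) * δ := mul_le_mul_of_nonneg_right h3 hδ0
              _ = δ * c / 2 * t^2 + δ / (2*c) * s^2 := by ring
    have hnormsq : ∀ ζ : l2 Z, HasSum (fun y => ‖ζ y‖^2) (‖ζ‖^2) := by
      intro ζ
      have h1 := lp.hasSum_norm (p := 2) (by norm_num) ζ
      have h2 : (2 : ℝ≥0∞).toReal = (2:ℝ) := by norm_num
      rw [h2] at h1
      have h3 : ∀ r : ℝ, 0 ≤ r → r ^ (2:ℝ) = r ^ 2 := fun r hr => by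
        rw [show (2:ℝ) = ((2:ℕ):ℝ) by norm_num, Real.rpow_natCast]
      simp only [h3 _ (norm_nonneg _)] at h1
      exact h1
    set A := ENNReal.ofReal (δ * c / 2)
    set B := ENNReal.ofReal (δ / (2*c))
    have hUsum : ∑' y, ENNReal.ofReal (‖ξ y‖^2) = ENNReal.ofReal (‖ξ‖^2) := by
      rw [← ENNReal.ofReal_tsum_of_nonneg (fun y => sq_nonneg _) (hnormsq ξ).summable,
        (hnormsq ξ).tsum_eq]
    have hVsum : ∑' x, ENNReal.ofReal (‖η x‖^2) = ENNReal.ofReal (‖η‖^2) := by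
      rw [← ENNReal.ofReal_tsum_of_nonneg (fun y => sq_nonneg _) (hnormsq η).summable,
        (hnormsq η).tsum_eq]
    have hsum_norm : Summable (fun y => ‖ξ y * (inner ℂ η (a (delta y)) : ℂ)‖) := by
      rw [summable_norm_iff]
      exact hB.summable
    have hstart : ‖(inner ℂ η (a ξ) : ℂ)‖ ≤ ∑' y, ‖ξ y * (inner ℂ η (a (delta y)) : ℂ)‖ := by
      rw [← hB.tsum_eq]
      exact norm_tsum_le_tsum_norm hsum_norm
    have echain : ENNReal.ofReal (∑' y, ‖ξ y * (inner ℂ η (a (delta y)) : ℂ)‖) ≤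
        ENNReal.ofReal (N * δ * (c * ‖ξ‖^2 + ‖η‖^2 / c) / 2) := by
      rw [ENNReal.ofReal_tsum_of_nonneg (fun y => norm_nonneg _) hsum_norm]
      calc ∑' y, ENNReal.ofReal ‖ξ y * (inner ℂ η (a (delta y)) : ℂ)‖
          ≤ ∑' y, ∑ x ∈ T y, (A * ENNReal.ofReal (‖ξ y‖^2) + B * ENNReal.ofReal (‖η x‖^2)) := by
            refine ENNReal.tsum_le_tsum fun y => ?_
            calc ENNReal.ofReal ‖ξ y * (inner ℂ η (a (delta y)) : ℂ)‖
                ≤ ENNReal.ofReal (∑ x ∈ T y, (δ * c / 2 * ‖ξ y‖^2 + δ / (2*c) * ‖η x‖^2)) :=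
                  ENNReal.ofReal_le_ofReal (bnd y)
              _ = ∑ x ∈ T y, ENNReal.ofReal (δ * c / 2 * ‖ξ y‖^2 + δ / (2*c) * ‖η x‖^2) := by
                  rw [ENNReal.ofReal_sum_of_nonneg]
                  intro i _
                  positivity
              _ = ∑ x ∈ T y, (A * ENNReal.ofReal (‖ξ y‖^2) + B * ENNReal.ofReal (‖η x‖^2)) := by
                  refine Finset.sum_congr rfl fun x _ => ?_
                  rw [ENNReal.ofReal_add (by positivity) (by positivity),
                    ENNReal.ofReal_mul (by positivity), ENNReal.ofReal_mul (by positivity)]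
        _ = (∑' y, (T y).card • (A * ENNReal.ofReal (‖ξ y‖^2))) +
            ∑' y, ∑ x ∈ T y, B * ENNReal.ofReal (‖η x‖^2) := by
            rw [← ENNReal.tsum_add]
            congr 1
            funext y
            rw [Finset.sum_add_distrib, Finset.sum_const]
        _ ≤ (∑' y, (N : ℝ≥0∞) * (A * ENNReal.ofReal (‖ξ y‖^2))) +
            (N : ℝ≥0∞) * ∑' x, B * ENNReal.ofReal (‖η x‖^2) := by
            refine add_le_add (ENNReal.tsum_le_tsum fun y => ?_)
              (swapE T hT hcard _)
            rw [nsmul_eq_mul]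
            exact mul_le_mul_left (by exact_mod_cast hcard y) _
        _ = (N : ℝ≥0∞) * (A * ENNReal.ofReal (‖ξ‖^2)) +
            (N : ℝ≥0∞) * (B * ENNReal.ofReal (‖η‖^2)) := by
            rw [ENNReal.tsum_mul_left, ENNReal.tsum_mul_left, ENNReal.tsum_mul_left,
              hUsum, hVsum]
        _ = ENNReal.ofReal (N * δ * (c * ‖ξ‖^2 + ‖η‖^2 / c) / 2) := by
            rw [show (N : ℝ≥0∞) = ENNReal.ofReal (N : ℝ) by
              rw [ENNReal.ofReal_natCast]]
            rw [← ENNReal.ofReal_mul (by positivity), ← ENNReal.ofReal_mul (by positivity),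
              ← ENNReal.ofReal_mul (by positivity), ← ENNReal.ofReal_mul (by positivity),
              ← ENNReal.ofReal_add (by positivity) (by positivity)]
            congr 1
            field_simp
    have final := le_trans (ENNReal.ofReal_le_ofReal hstart) echain
    rwa [ENNReal.ofReal_le_ofReal_iff (by positivity)] at final
  refine a.opNorm_le_bound (by positivity) (fun ξ => ?_)
  by_cases hξ : ‖a ξ‖ = 0
  · rw [hξ]; positivity
  have haξ : 0 < ‖a ξ‖ := lt_of_le_of_ne (norm_nonneg _) (Ne.symm hξ)
  have hξ0 : 0 < ‖ξ‖ := by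
    rcases eq_or_lt_of_le (norm_nonneg ξ) with h | h
    · exfalso
      have h0 : ξ = 0 := by rwa [eq_comm, norm_eq_zero] at h
      rw [h0, map_zero, norm_zero] at haξ
      exact lt_irrefl 0 haξ
    · exact h
  have hcpos : 0 < ‖a ξ‖ / ‖ξ‖ := div_pos haξ hξ0
  have hm := master (‖a ξ‖ / ‖ξ‖) hcpos ξ (a ξ)
  have hnorm : ‖a ξ‖^2 ≤ ‖(inner ℂ (a ξ) (a ξ) : ℂ)‖ := by
    rw [← inner_self_eq_norm_sq (𝕜 := ℂ) (a ξ)]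
    exact RCLike.re_le_norm _
  replace hm := le_trans hnorm hm
  have hsimp : (N:ℝ) * δ * ((‖a ξ‖ / ‖ξ‖) * ‖ξ‖^2 + ‖a ξ‖^2 / (‖a ξ‖ / ‖ξ‖)) / 2 =
      (N:ℝ) * δ * (‖a ξ‖ * ‖ξ‖) := by
    field_simp
    ring
  rw [hsimp] at hm
  nlinarith [hm, haξ, hξ0]

end SchurTest

section Compactness

variable {Z : Type*} [MetricSpace Z]

/-- A ghost operator of finite propagation on a uniformly locally finite space is compact. -/
lemma compact_of_ghost_prop (hZ : UniformlyLocallyFinite Z)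
    (a : l2 Z →L[ℂ] l2 Z) {S : ℝ} (hS : 0 < S) (hprop : HasPropagationLE a S)
    (hg : IsGhost a) : IsCompactOperator ⇑a := by
  classical
  obtain ⟨N, hN⟩ := hZ S hS
  have hclosed : IsClosed {f : l2 Z →L[ℂ] l2 Z | IsCompactOperator ⇑f} :=
    isClosed_setOf_isCompactOperator
  have hmem : a ∈ {f : l2 Z →L[ℂ] l2 Z | IsCompactOperator ⇑f} := by
    rw [← hclosed.closure_eq, Metric.mem_closure_iff]
    intro ε hε
    have hε'pos : 0 < ε / (2*(N+1)) := by positivity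
    obtain ⟨F, hFb, hF⟩ := hg _ hε'pos
    have hNe' : (N:ℝ) * (ε / (2*(N+1))) < ε := by
      have h2 : (N:ℝ) / (2*((N:ℝ)+1)) < 1 := by
        rw [div_lt_one (by positivity)]
        nlinarith [Nat.cast_nonneg (α := ℝ) N]
      calc (N:ℝ) * (ε / (2*(N+1))) = ε * ((N:ℝ) / (2*((N:ℝ)+1))) := by ring
        _ < ε * 1 := (mul_lt_mul_iff_right₀ hε).2 h2
        _ = ε := mul_one _
    by_cases hZe : Nonempty Z
    · obtain ⟨z⟩ := hZe
      obtain ⟨r, hr⟩ := hFb.subset_closedBall z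
      obtain ⟨N', hN'⟩ := hZ (max r S) (lt_max_of_lt_right hS)
      have hball : (Metric.closedBall z (max r S)).Finite := (hN' z).1
      set s : Finset Z := hball.toFinset with hsdef
      have hFs : ∀ x ∈ F, x ∈ s := by
        intro x hx
        rw [hsdef, Set.Finite.mem_toFinset]
        exact Metric.closedBall_subset_closedBall (le_max_left _ _) (hr hx)
      set t := (proj s).comp (a.comp (proj s)) with htdef
      refine ⟨t, ?_, ?_⟩
      · show IsCompactOperator ⇑t
        have h1 : ⇑t = (⇑(proj s) ∘ ⇑a) ∘ ⇑(proj s) := rfl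
        rw [h1]
        exact (isCompactOperator_proj s).continuous_comp
          ((proj s).continuous.comp a.continuous)
      · rw [dist_eq_norm]
        have hent' : ∀ x y : Z, ‖entry (a - t) x y‖ ≤ ε / (2*(N+1)) := by
          intro x y
          rw [entry_sub, htdef, entry_trunc]
          by_cases hxy : x ∈ s ∧ y ∈ s
          · rw [if_pos hxy, sub_self, norm_zero]
            exact le_of_lt hε'pos
          · rw [if_neg hxy, sub_zero]
            have hFxy : (x, y) ∉ F ×ˢ F := by
              intro hc
              rw [Set.mem_prod] at hc
              exact hxy ⟨hFs x hc.1, hFs y hc.2⟩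
            exact le_of_lt (hF x y hFxy)
        have hprop' : ∀ x y : Z, S < dist x y → entry (a - t) x y = 0 := by
          intro x y hd
          rw [entry_sub, htdef, entry_trunc, hprop x y hd]
          split_ifs <;> simp
        have := opNorm_le_of_prop (a - t) N (le_of_lt hε'pos) hN hprop' hent'
        exact lt_of_le_of_lt this hNe'
    · -- Z is empty
      refine ⟨0, ?_, ?_⟩
      · show IsCompactOperator ⇑(0 : l2 Z →L[ℂ] l2 Z)
        simpa using (isCompactOperator_zero (M₁ := l2 Z) (M₂ := l2 Z))
      · rw [dist_eq_norm, sub_zero]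
        have hent' : ∀ x y : Z, ‖entry a x y‖ ≤ ε / (2*(N+1)) := by
          intro x y
          exact (hZe ⟨x⟩).elim
        have := opNorm_le_of_prop a N (le_of_lt hε'pos) hN hprop hent'
        exact lt_of_le_of_lt this hNe'
  exact hmem

end Compactness

/-- If a uniformly locally finite metric space `Z` admits uniformly
bounded Schur multipliers supported near the diagonal and close to `1` on tubes, then
every ghost operator in the uniform Roe algebra of `Z` is compact. -/
theorem ghosts_are_compact_of_schur_multipliers
    (Z : Type*) [MetricSpace Z] (hZ : UniformlyLocallyFinite Z)
    (C : ℝ) (hC : 0 < C)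
    (h : ∀ R > (0 : ℝ), ∀ ε > (0 : ℝ), ∃ S > (0 : ℝ), ∃ k : Z → Z → ℂ,
      IsSchurMultiplierWithBound k C ∧ (∀ x y : Z, S < dist x y → k x y = 0) ∧
      ∀ x y : Z, dist x y ≤ R → ‖k x y - 1‖ < ε) :
    ∀ a ∈ uniformRoeAlgebra Z, IsGhost a → IsCompactOperator (⇑a) := by
  classical
  intro a ha hg
  have hclosed : IsClosed {f : l2 Z →L[ℂ] l2 Z | IsCompactOperator ⇑f} :=
    isClosed_setOf_isCompactOperator
  have hmem : a ∈ {f : l2 Z →L[ℂ] l2 Z | IsCompactOperator ⇑f} := by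
    rw [← hclosed.closure_eq, Metric.mem_closure_iff]
    intro ε hε
    have hε1 : 0 < ε / (3*(C+1)) := by positivity
    obtain ⟨b, hbmem, hab⟩ := Metric.mem_closure_iff.1 ha _ hε1
    obtain ⟨R₀, hR₀⟩ := hbmem
    have hR : (0:ℝ) < max R₀ 1 := lt_of_lt_of_le one_pos (le_max_right _ _)
    have hbprop : HasPropagationLE b (max R₀ 1) :=
      fun x y hd => hR₀ x y (lt_of_le_of_lt (le_max_left _ _) hd)
    obtain ⟨N, hN⟩ := hZ _ hR
    have hε' : 0 < ε / (3*(N+1)*(‖b‖+1)) := by positivity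
    obtain ⟨S, hS, k, ⟨M, hM, hMe⟩, hk0, hk1⟩ := h _ hR _ hε'
    have hkbound : ∀ x y : Z, ‖k x y‖ ≤ C := by
      intro x y
      have h1 := hMe (rankOne x y) x y
      rw [entry_rankOne_self, mul_one] at h1
      calc ‖k x y‖ = ‖entry (M (rankOne x y)) x y‖ := by rw [h1]
        _ ≤ ‖M (rankOne x y)‖ := norm_entry_le _ x y
        _ ≤ ‖M‖ * ‖rankOne x y‖ := M.le_opNorm _
        _ ≤ C * 1 := mul_le_mul hM (norm_rankOne_le x y) (norm_nonneg _) (le_of_lt hC)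
        _ = C := mul_one _
    have hTprop : HasPropagationLE (M a) S := by
      intro x y hd
      rw [hMe, hk0 x y hd, zero_mul]
    have hTghost : IsGhost (M a) := by
      intro ε'' hε''
      obtain ⟨F, hFb, hF⟩ := hg (ε''/C) (by positivity)
      refine ⟨F, hFb, fun x y hxy => ?_⟩
      rw [hMe]
      calc ‖k x y * entry a x y‖ = ‖k x y‖ * ‖entry a x y‖ := norm_mul _ _
        _ ≤ C * ‖entry a x y‖ :=
            mul_le_mul_of_nonneg_right (hkbound x y) (norm_nonneg _)
        _ < C * (ε''/C) := (mul_lt_mul_iff_right₀ hC).2 (hF x y hxy)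
        _ = ε'' := by field_simp
    have hTcompact : IsCompactOperator ⇑(M a) :=
      compact_of_ghost_prop hZ (M a) hS hTprop hTghost
    refine ⟨M a, hTcompact, ?_⟩
    rw [dist_eq_norm]
    have hsplit : a - M a = (a - b) + (b - M b) + (M b - M a) := by abel
    have htri : ‖a - M a‖ ≤ ‖a - b‖ + ‖b - M b‖ + ‖M b - M a‖ := by
      rw [hsplit]
      exact le_trans (norm_add_le _ _) (add_le_add_left (norm_add_le _ _) _)
    have hb1 : ‖a - b‖ < ε / 3 := by
      have : ε / (3*(C+1)) ≤ ε / 3 := by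
        rw [div_le_div_iff₀ (by positivity) (by norm_num)]
        nlinarith [hε, hC]
      calc ‖a - b‖ = dist a b := (dist_eq_norm a b).symm
        _ < ε / (3*(C+1)) := hab
        _ ≤ ε / 3 := this
    have hb3 : ‖M b - M a‖ ≤ ε / 3 := by
      have h1 : M b - M a = M (b - a) := by rw [map_sub]
      have h2 : ‖b - a‖ < ε / (3*(C+1)) := by
        rw [norm_sub_rev]
        rw [dist_eq_norm] at hab
        exact hab
      calc ‖M b - M a‖ = ‖M (b - a)‖ := by rw [h1]
        _ ≤ ‖M‖ * ‖b - a‖ := M.le_opNorm _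
        _ ≤ C * ‖b - a‖ := mul_le_mul_of_nonneg_right hM (norm_nonneg _)
        _ ≤ C * (ε / (3*(C+1))) := mul_le_mul_of_nonneg_left (le_of_lt h2) (le_of_lt hC)
        _ ≤ ε / 3 := by
            rw [← mul_div_assoc, div_le_div_iff₀ (by positivity) (by norm_num)]
            nlinarith [hC, hε]
    have hb2 : ‖b - M b‖ ≤ ε / 3 := by
      have hent' : ∀ x y : Z, ‖entry (b - M b) x y‖ ≤
          (ε / (3*(N+1)*(‖b‖+1))) * ‖b‖ := by
        intro x y
        rw [entry_sub, hMe]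
        have heq : entry b x y - k x y * entry b x y = (1 - k x y) * entry b x y := by ring
        rw [heq, norm_mul]
        by_cases hd : dist x y ≤ max R₀ 1
        · have h1 : ‖1 - k x y‖ < ε / (3*(N+1)*(‖b‖+1)) := by
            rw [norm_sub_rev]
            exact hk1 x y hd
          exact mul_le_mul (le_of_lt h1) (norm_entry_le b x y) (norm_nonneg _)
            (le_of_lt hε')
        · rw [hbprop x y (lt_of_not_ge hd), norm_zero, mul_zero]
          positivity
      have hprop' : ∀ x y : Z, (max R₀ 1) < dist x y → entry (b - M b) x y = 0 := by
        intro x y hd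
        rw [entry_sub, hMe, hbprop x y hd, mul_zero, sub_zero]
      have hop := opNorm_le_of_prop (b - M b) N
        (by positivity) hN hprop' hent'
      refine le_trans hop ?_
      have hkey : (N:ℝ) * ((ε / (3*(N+1)*(‖b‖+1))) * ‖b‖) ≤ ε / 3 := by
        have hbn : 0 ≤ ‖b‖ := norm_nonneg b
        have hNn : (0:ℝ) ≤ (N:ℝ) := Nat.cast_nonneg N
        rw [show (N:ℝ) * ((ε / (3*((N:ℝ)+1)*(‖b‖+1))) * ‖b‖)
            = ((N:ℝ)*‖b‖) * ε / (3*((N:ℝ)+1)*(‖b‖+1)) by ring,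
          div_le_div_iff₀ (by positivity) (by norm_num)]
        nlinarith [hε, hbn, hNn, mul_nonneg hε.le hbn, mul_nonneg hε.le hNn,
          mul_nonneg (mul_nonneg hNn hbn) hε.le]
      exact hkey
    calc ‖a - M a‖ ≤ ‖a - b‖ + ‖b - M b‖ + ‖M b - M a‖ := htri
      _ < ε / 3 + ε / 3 + ε / 3 := by
          have := add_lt_add_of_lt_of_le hb1 hb2
          linarith [hb3]
      _ = ε := by ring
  exact hmem
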